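/- Let 𝒳 ∈ S(n,n,3) be connected and let π be a standard ordering of 𝒳. If Δ(𝒳,π,k) = ⌈n/4⌉ + 1 for some 1 ≤ k ≤ n, then k ≥ ⌈n/4⌉ and |X_{π(1)} ∪ ⋯ ∪ X_{π(k)}| ≥ ⌈n/2⌉ + (k − ⌈n/4⌉). -/

import Mathlib

open Finset

/-- The union of the first `k` sets in the ordering `π` (positions `1,…,k`,
i.e. 0-based indices `< k`). -/
def unionUpTo {α : Type*} [DecidableEq α] {m : ℕ} (X : Fin m → Finset α)
    (π : Equiv.Perm (Fin m)) (k : ℕ) : Finset α :=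
  (Finset.univ.filter (fun i : Fin m => (i : ℕ) < k)).biUnion (fun i => X (π i))

/-- `Δ(𝒳,π,k) = |X_{π(1)} ∪ ⋯ ∪ X_{π(k)}| − k`. -/
def delta {α : Type*} [DecidableEq α] {m : ℕ} (X : Fin m → Finset α)
    (π : Equiv.Perm (Fin m)) (k : ℕ) : ℤ :=
  ((unionUpTo X π k).card : ℤ) - k

/-- `Δ(𝒳,π) = max_{1 ≤ k ≤ m} Δ(𝒳,π,k)`. -/
noncomputable def DeltaPerm {α : Type*} [DecidableEq α] {m : ℕ} (X : Fin m → Finset α)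
    (π : Equiv.Perm (Fin m)) : ℤ :=
  sSup {d : ℤ | ∃ k : ℕ, 1 ≤ k ∧ k ≤ m ∧ d = delta X π k}

/-- `Δ(𝒳) = min_π Δ(𝒳,π)`. -/
noncomputable def DeltaMin {α : Type*} [DecidableEq α] {m : ℕ} (X : Fin m → Finset α) : ℤ :=
  sInf {d : ℤ | ∃ π : Equiv.Perm (Fin m), d = DeltaPerm X π}

/-- `f_c(n,m) = max_{𝒳 ∈ S(n,m,c)} Δ(𝒳)`, families of `m` subsets of an
`n`-element ground set, each of size at most `c`. -/
noncomputable def fFam (n m c : ℕ) : ℤ :=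
  sSup {d : ℤ | ∃ X : Fin m → Finset (Fin n), (∀ i, (X i).card ≤ c) ∧ d = DeltaMin X}

/-- The graph `G_𝒳`: distinct `x,y` are adjacent iff `{x,y} ⊆ X_i` for some `i`. -/
def famGraph {α : Type*} {m : ℕ} (X : Fin m → Finset α) : SimpleGraph α where
  Adj x y := x ≠ y ∧ ∃ i, x ∈ X i ∧ y ∈ X i
  symm := by
    constructor
    rintro x y ⟨hxy, i, hx, hy⟩
    exact ⟨hxy.symm, i, hy, hx⟩
  loopless := by
    constructor
    rintro x ⟨hx, -⟩
    exact hx rfl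

/-- The vertex set of `G_𝒳`, i.e. `X₁ ∪ ⋯ ∪ X_m`. -/
def groundSet {α : Type*} [DecidableEq α] {m : ℕ} (X : Fin m → Finset α) : Finset α :=
  Finset.univ.biUnion X

/-- `𝒳` is connected: the vertex set is nonempty and every two of its
vertices are joined by a path of `G_𝒳`. -/
def FamConnected {α : Type*} [DecidableEq α] {m : ℕ} (X : Fin m → Finset α) : Prop :=
  (groundSet X).Nonempty ∧
    ∀ x ∈ groundSet X, ∀ y ∈ groundSet X, (famGraph X).Reachable x y

/-- A standard ordering: for each `t` with `1 ≤ t < m`, the set placed at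
position `t+1` minimizes `|X_j \ (X_{π(1)} ∪ ⋯ ∪ X_{π(t)})|` over all not yet
ordered sets. -/
def IsStandardOrdering {α : Type*} [DecidableEq α] {m : ℕ} (X : Fin m → Finset α)
    (π : Equiv.Perm (Fin m)) : Prop :=
  ∀ (t : ℕ) (ht : t < m), 1 ≤ t →
    ∀ j : Fin m, (∀ i : Fin m, (i : ℕ) < t → π i ≠ j) →
      (X (π ⟨t, ht⟩) \ unionUpTo X π t).card ≤ (X j \ unionUpTo X π t).card

/-- For a connected `𝒳 ∈ S(n,n,3)` and a standard ordering `π`, if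
`Δ(𝒳,π,k) = ⌈n/4⌉ + 1` then `k ≥ ⌈n/4⌉` and
`|X_{π(1)} ∪ ⋯ ∪ X_{π(k)}| ≥ ⌈n/2⌉ + (k − ⌈n/4⌉)`. -/

lemma unionUpTo_zero {α : Type*} [DecidableEq α] {m : ℕ} (X : Fin m → Finset α)
    (π : Equiv.Perm (Fin m)) : unionUpTo X π 0 = ∅ := by
  simp [unionUpTo]

lemma subset_unionUpTo {α : Type*} [DecidableEq α] {m : ℕ} (X : Fin m → Finset α)
    (π : Equiv.Perm (Fin m)) {k : ℕ} {i : Fin m} (hi : (i : ℕ) < k) :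
    X (π i) ⊆ unionUpTo X π k := by
  intro x hx
  simp only [unionUpTo, mem_biUnion, mem_filter, mem_univ, true_and]
  exact ⟨i, hi, hx⟩

lemma unionUpTo_succ {α : Type*} [DecidableEq α] {m : ℕ} (X : Fin m → Finset α)
    (π : Equiv.Perm (Fin m)) {t : ℕ} (ht : t < m) :
    unionUpTo X π (t + 1) = unionUpTo X π t ∪ X (π ⟨t, ht⟩) := by
  ext x
  simp only [unionUpTo, mem_biUnion, mem_filter, mem_univ, true_and, mem_union,
    Nat.lt_succ_iff_lt_or_eq]
  constructor
  · rintro ⟨i, hi | hi, hx⟩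
    · exact Or.inl ⟨i, hi, hx⟩
    · refine Or.inr ?_
      have : i = ⟨t, ht⟩ := Fin.ext hi
      rwa [this] at hx
  · rintro (⟨i, hi, hx⟩ | hx)
    · exact ⟨i, Or.inl hi, hx⟩
    · exact ⟨⟨t, ht⟩, Or.inr rfl, hx⟩

lemma subset_groundSet {α : Type*} [DecidableEq α] {m : ℕ} (X : Fin m → Finset α)
    (j : Fin m) : X j ⊆ groundSet X := by
  intro x hx
  simp only [groundSet, mem_biUnion, mem_univ, true_and]
  exact ⟨j, hx⟩

lemma unionUpTo_subset_groundSet {α : Type*} [DecidableEq α] {m : ℕ} (X : Fin m → Finset α)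
    (π : Equiv.Perm (Fin m)) (k : ℕ) : unionUpTo X π k ⊆ groundSet X := by
  intro x hx
  simp only [unionUpTo, mem_biUnion, mem_filter, mem_univ, true_and] at hx
  obtain ⟨i, -, hx⟩ := hx
  exact subset_groundSet X (π i) hx

/-- Key step: with a standard ordering of a connected family of sets of size ≤ 3,
once the union is nonempty, the next set adds at most 2 new elements. -/
lemma key_step {n : ℕ} (X : Fin n → Finset (Fin n))
    (hcard : ∀ i, (X i).card ≤ 3) (hconn : FamConnected X)
    (π : Equiv.Perm (Fin n)) (hstd : IsStandardOrdering X π)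
    {t : ℕ} (ht : t < n) (ht1 : 1 ≤ t) (hne : (unionUpTo X π t).Nonempty) :
    (X (π ⟨t, ht⟩) \ unionUpTo X π t).card ≤ 2 := by
  suffices h : ∃ j : Fin n, (∀ i : Fin n, (i : ℕ) < t → π i ≠ j) ∧
      (X j \ unionUpTo X π t).card ≤ 2 by
    obtain ⟨j, hj, hj2⟩ := h
    exact le_trans (hstd t ht ht1 j hj) hj2
  by_cases hall : groundSet X ⊆ unionUpTo X π t
  · -- everything is covered: any unused j works
    have hcards : ((univ.filter (fun i : Fin n => (i : ℕ) < t)).image π).card < n := by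
      calc ((univ.filter (fun i : Fin n => (i : ℕ) < t)).image π).card
          ≤ (univ.filter (fun i : Fin n => (i : ℕ) < t)).card := card_image_le
        _ ≤ (Finset.range t).card :=
            Finset.card_le_card_of_injOn (fun i => (i : ℕ))
              (fun i hi => by simpa using hi)
              (fun a _ b _ hab => Fin.ext hab)
        _ = t := by simp
        _ < n := ht
    have : ∃ j : Fin n, j ∉ (univ.filter (fun i : Fin n => (i : ℕ) < t)).image π := by
      by_contra hc
      push_neg at hc
      have : (univ : Finset (Fin n)) ⊆ (univ.filter (fun i : Fin n => (i : ℕ) < t)).image π :=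
        fun j _ => hc j
      have := Finset.card_le_card this
      simp only [card_univ, Fintype.card_fin] at this
      omega
    obtain ⟨j, hj⟩ := this
    refine ⟨j, ?_, ?_⟩
    · intro i hi hij
      exact hj (mem_image.mpr ⟨i, by simp [hi], hij⟩)
    · have : X j \ unionUpTo X π t = ∅ := by
        rw [sdiff_eq_empty_iff_subset]
        exact (subset_groundSet X j).trans hall
      simp [this]
  · -- there is a vertex outside the union; walk from inside to it and find a crossing edge
    obtain ⟨y, hy, hyn⟩ : ∃ y, y ∈ groundSet X ∧ y ∉ unionUpTo X π t := by
      rw [Finset.not_subset] at hall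
      obtain ⟨y, h1, h2⟩ := hall
      exact ⟨y, h1, h2⟩
    obtain ⟨x, hx⟩ := hne
    have hxg : x ∈ groundSet X := unionUpTo_subset_groundSet X π t hx
    obtain ⟨p⟩ := hconn.2 x hxg y hy
    obtain ⟨d, -, hd1, hd2⟩ := p.exists_boundary_dart (↑(unionUpTo X π t) : Set (Fin n))
      (by simpa using hx) (by simpa using hyn)
    simp only [Finset.mem_coe] at hd1 hd2
    obtain ⟨-, i, hi1, hi2⟩ := d.adj
    refine ⟨i, ?_, ?_⟩
    · rintro i' hi' rfl
      exact hd2 (subset_unionUpTo X π hi' hi2)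
    · calc (X i \ unionUpTo X π t).card
          ≤ ((X i).erase d.fst).card := by
            apply card_le_card
            intro z hz
            rw [mem_sdiff] at hz
            rw [mem_erase]
            exact ⟨by rintro rfl; exact hz.2 hd1, hz.1⟩
        _ = (X i).card - 1 := card_erase_of_mem hi1
        _ ≤ 2 := by have := hcard i; omega

lemma union_card_le {n : ℕ} (X : Fin n → Finset (Fin n))
    (hcard : ∀ i, (X i).card ≤ 3) (hconn : FamConnected X)
    (π : Equiv.Perm (Fin n)) (hstd : IsStandardOrdering X π) :
    ∀ k : ℕ, 1 ≤ k → k ≤ n → (unionUpTo X π k).card ≤ 2 * k + 1 := by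
  intro k hk
  induction k with
  | zero => omega
  | succ t ih =>
    intro hkn
    have ht : t < n := by omega
    rw [unionUpTo_succ X π ht]
    rcases Nat.eq_zero_or_pos t with rfl | ht1
    · rw [unionUpTo_zero]
      simpa using (hcard (π ⟨0, ht⟩)).trans (by norm_num)
    rcases (unionUpTo X π t).eq_empty_or_nonempty with he | hne
    · rw [he, Finset.empty_union]
      have := hcard (π ⟨t, ht⟩)
      omega
    · have h2 := key_step X hcard hconn π hstd ht ht1 hne
      have hu := ih ht1 (by omega)
      calc (unionUpTo X π t ∪ X (π ⟨t, ht⟩)).card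
          = (unionUpTo X π t ∪ (X (π ⟨t, ht⟩) \ unionUpTo X π t)).card := by
            rw [Finset.union_sdiff_self_eq_union]
        _ ≤ (unionUpTo X π t).card + (X (π ⟨t, ht⟩) \ unionUpTo X π t).card :=
            card_union_le _ _
        _ ≤ 2 * (t + 1) + 1 := by omega

theorem union_card_lower_bound {n : ℕ} (X : Fin n → Finset (Fin n))
    (hcard : ∀ i, (X i).card ≤ 3) (hconn : FamConnected X)
    (π : Equiv.Perm (Fin n)) (hstd : IsStandardOrdering X π)
    (k : ℕ) (hk : 1 ≤ k) (hkn : k ≤ n)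
    (hdelta : delta X π k = ⌈(n : ℚ) / 4⌉ + 1) :
    ⌈(n : ℚ) / 4⌉ ≤ (k : ℤ) ∧
      ⌈(n : ℚ) / 2⌉ + ((k : ℤ) - ⌈(n : ℚ) / 4⌉) ≤ ((unionUpTo X π k).card : ℤ) := by
  have hub : ((unionUpTo X π k).card : ℤ) ≤ 2 * k + 1 := by
    exact_mod_cast union_card_le X hcard hconn π hstd k hk hkn
  have hc4 : (n : ℚ) / 4 ≤ (⌈(n : ℚ) / 4⌉ : ℚ) := Int.le_ceil _
  have hc2 : ⌈(n : ℚ) / 2⌉ ≤ 2 * ⌈(n : ℚ) / 4⌉ + 1 := by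
    rw [Int.ceil_le]
    push_cast
    linarith
  unfold delta at hdelta
  constructor
  · linarith
  · linarith
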